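/- Let P1, P2, P3, P4, P̃3, P̃4, x7 be real numbers, τ ≥ 0, and μ a real number such that k = iμ satisfies the transcendental characteristic equation k⁴ + P1k³ + P2k² + P3k + P4 = (x7k² − P̃3k − P̃4)e^{−kτ}. Then z = μ² satisfies μ⁸ + y7μ⁶ + y8μ⁴ + y9μ² + y10 = 0, where y7 = P1² − 2P2, y8 = 2P4 + P2² − 2P1P3 − x7², y9 = P3² − 2P2P4 − P̃3² − 2x7P̃4, and y10 = P4² − P̃4². -/
import Mathlib


/-- If `k = iμ` solves the transcendental characteristic equation at the
endemic steady state of model (2), then `μ²` is a root of the degree-eight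
polynomial determining the possible Hopf frequencies. -/
theorem hopf_frequency_equation
    (P1 P2 P3 P4 P3t P4t x7 tau mu : ℝ) (htau : 0 ≤ tau)
    (h : ((mu : ℂ) * Complex.I) ^ 4 + (P1 : ℂ) * ((mu : ℂ) * Complex.I) ^ 3
        + (P2 : ℂ) * ((mu : ℂ) * Complex.I) ^ 2
        + (P3 : ℂ) * ((mu : ℂ) * Complex.I) + (P4 : ℂ)
      = ((x7 : ℂ) * ((mu : ℂ) * Complex.I) ^ 2
          - (P3t : ℂ) * ((mu : ℂ) * Complex.I) - (P4t : ℂ))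
        * Complex.exp (-((mu : ℂ) * Complex.I) * (tau : ℂ))) :
    mu ^ 8 + (P1 ^ 2 - 2 * P2) * mu ^ 6
      + (2 * P4 + P2 ^ 2 - 2 * P1 * P3 - x7 ^ 2) * mu ^ 4
      + (P3 ^ 2 - 2 * P2 * P4 - P3t ^ 2 - 2 * x7 * P4t) * mu ^ 2
      + (P4 ^ 2 - P4t ^ 2) = 0 := by
  have h2 := congrArg Complex.normSq h
  rw [Complex.normSq_mul, Complex.normSq_eq_norm_sq (Complex.exp _), Complex.norm_exp] at h2
  simp only [Complex.neg_re, Complex.mul_re, Complex.mul_im, Complex.ofReal_re,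
    Complex.ofReal_im, Complex.I_re, Complex.I_im] at h2
  norm_num at h2
  simp only [pow_succ, pow_zero, one_mul] at h2
  simp only [Complex.normSq_apply, Complex.add_re, Complex.add_im, Complex.mul_re,
    Complex.mul_im, Complex.sub_re, Complex.sub_im, Complex.ofReal_re, Complex.ofReal_im,
    Complex.I_re, Complex.I_im] at h2
  ring_nf at h2 ⊢
  linarith [h2]
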